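/- arXiv:2410.12085 — 3 statements merged into one kernel-verified Lean document; each statement's English description precedes it below -/
import Mathlib

section
/- For real numbers μ₁, μ₂, a real σ > 0, and a real α > 1, the Rényi divergence of order α between the one-dimensional Gaussian measures N(μ₁, σ²) and N(μ₂, σ²) equals α(μ₁ − μ₂)²/(2σ²). -/
open MeasureTheory ProbabilityTheory
open scoped NNReal ENNReal Real

/- Rényi divergence of order `α` between measures `P` and `Q`:
`D_α(P‖Q) = (1/(α−1))·log ∫ (dP/dQ)^α dQ`, taken to be `+∞` if `P` is not
absolutely continuous with respect to `Q`. -/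
open Classical in
noncomputable def renyiDiv {X : Type*} [MeasurableSpace X] (α : ℝ) (P Q : Measure X) : EReal :=
  if P ≪ Q then
    (((α - 1)⁻¹ * Real.log (∫ x, (P.rnDeriv Q x).toReal ^ α ∂Q) : ℝ) : EReal)
  else ⊤

open Real in
lemma renyi_pdf_calc (μ₁ μ₂ : ℝ) {v : ℝ≥0} (hv : v ≠ 0) (α : ℝ) (x : ℝ) :
    gaussianPDFReal μ₂ v x * ((gaussianPDFReal μ₂ v x)⁻¹ * gaussianPDFReal μ₁ v x) ^ α
      = rexp (α * (α - 1) * (μ₁ - μ₂) ^ 2 / (2 * v)) *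
        gaussianPDFReal (α * μ₁ + (1 - α) * μ₂) v x := by
  have hvpos : (0 : ℝ) < (v : ℝ) := by positivity
  have hc : (0 : ℝ) < (√(2 * π * v))⁻¹ := by positivity
  simp only [gaussianPDFReal]
  have hratio : ((√(2 * π * v))⁻¹ * rexp (-(x - μ₂) ^ 2 / (2 * v)))⁻¹ *
      ((√(2 * π * v))⁻¹ * rexp (-(x - μ₁) ^ 2 / (2 * v)))
      = rexp (-(x - μ₁) ^ 2 / (2 * v) - -(x - μ₂) ^ 2 / (2 * v)) := by
    rw [Real.exp_sub, mul_inv]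
    field_simp
  rw [hratio, ← Real.exp_log (x := rexp _ ^ α) (by positivity),
    Real.log_rpow (Real.exp_pos _), Real.log_exp]
  rw [mul_assoc, ← Real.exp_add, mul_left_comm, ← Real.exp_add]
  congr 1
  rw [Real.exp_eq_exp]
  field_simp
  ring

/-- The Rényi divergence of order `α > 1` between the one-dimensional Gaussian
measures `N(μ₁, σ²)` and `N(μ₂, σ²)` equals `α(μ₁ − μ₂)²/(2σ²)`. -/
theorem renyiDiv_gaussianReal (μ₁ μ₂ σ α : ℝ) (hσ : 0 < σ) (hα : 1 < α) :
    renyiDiv α (gaussianReal μ₁ (σ ^ 2).toNNReal) (gaussianReal μ₂ (σ ^ 2).toNNReal)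
      = ((α * (μ₁ - μ₂) ^ 2 / (2 * σ ^ 2) : ℝ) : EReal) := by
  set v : ℝ≥0 := (σ ^ 2).toNNReal with hv_def
  have hvr : (v : ℝ) = σ ^ 2 := Real.coe_toNNReal _ (by positivity)
  have hv : v ≠ 0 := by
    intro h
    rw [h] at hvr
    simp at hvr
    nlinarith
  set P := gaussianReal μ₁ v with hP
  set Q := gaussianReal μ₂ v with hQ
  have hPQ : P ≪ Q :=
    (gaussianReal_absolutelyContinuous μ₁ hv).trans (gaussianReal_absolutelyContinuous' μ₂ hv)
  have hQvol : Q ≪ volume := gaussianReal_absolutelyContinuous μ₂ hv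
  -- a.e. formula for the RN derivative
  have hRn : P.rnDeriv Q =ᵐ[volume]
      fun x ↦ (gaussianPDF μ₂ v x)⁻¹ * gaussianPDF μ₁ v x := by
    have h1 : P.rnDeriv (volume.withDensity (gaussianPDF μ₂ v)) =ᵐ[volume]
        fun x ↦ (gaussianPDF μ₂ v x)⁻¹ * P.rnDeriv volume x :=
      Measure.rnDeriv_withDensity_right P volume
        (measurable_gaussianPDF μ₂ v).aemeasurable
        (ae_of_all _ fun x ↦ (gaussianPDF_pos μ₂ hv x).ne')
        (ae_of_all _ fun x ↦ ENNReal.ofReal_ne_top)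
    have h2 : P.rnDeriv volume =ᵐ[volume] gaussianPDF μ₁ v := rnDeriv_gaussianReal μ₁ v
    rw [hQ, gaussianReal_of_var_ne_zero _ hv]
    filter_upwards [h1, h2] with x hx1 hx2
    rw [hx1, hx2]
  have hRnQ : (fun x ↦ (P.rnDeriv Q x).toReal ^ α) =ᵐ[Q]
      fun x ↦ ((gaussianPDFReal μ₂ v x)⁻¹ * gaussianPDFReal μ₁ v x) ^ α := by
    refine hQvol.ae_eq ?_
    filter_upwards [hRn] with x hx
    rw [hx]
    congr 1
    rw [ENNReal.toReal_mul, ENNReal.toReal_inv, gaussianPDF,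
      gaussianPDF, ENNReal.toReal_ofReal (gaussianPDFReal_nonneg _ _ _),
      ENNReal.toReal_ofReal (gaussianPDFReal_nonneg _ _ _)]
  -- compute the integral
  have hint : ∫ x, (P.rnDeriv Q x).toReal ^ α ∂Q
      = Real.exp (α * (α - 1) * (μ₁ - μ₂) ^ 2 / (2 * v)) := by
    rw [integral_congr_ae hRnQ, hQ, gaussianReal_of_var_ne_zero _ hv]
    have hwd : volume.withDensity (gaussianPDF μ₂ v)
        = volume.withDensity (fun x ↦ ((gaussianPDFReal μ₂ v x).toNNReal : ℝ≥0∞)) := rfl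
    rw [hwd, integral_withDensity_eq_integral_smul
      ((measurable_gaussianPDFReal μ₂ v).real_toNNReal) _]
    have : ∀ x, (gaussianPDFReal μ₂ v x).toNNReal •
          ((gaussianPDFReal μ₂ v x)⁻¹ * gaussianPDFReal μ₁ v x) ^ α
        = Real.exp (α * (α - 1) * (μ₁ - μ₂) ^ 2 / (2 * v)) *
          gaussianPDFReal (α * μ₁ + (1 - α) * μ₂) v x := by
      intro x
      rw [NNReal.smul_def, smul_eq_mul, Real.coe_toNNReal _ (gaussianPDFReal_nonneg _ _ _)]
      exact renyi_pdf_calc μ₁ μ₂ hv α x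
    simp_rw [this]
    rw [integral_const_mul, integral_gaussianPDFReal_eq_one _ hv, mul_one]
  rw [renyiDiv, if_pos hPQ, hint, Real.log_exp]
  norm_cast
  push_cast
  rw [hvr]
  have hα1 : α - 1 ≠ 0 := by linarith
  field_simp
end

section
/- Let m be a positive integer, let x, y ∈ ℝ^m, let Δ > 0 with ‖x − y‖₂ ≤ Δ, let α > 1 and τ > 0 be reals, and set σ² = Δ²·α/(2τ). Let P be the product measure on ℝ^m whose i-th factor is N(xᵢ, σ²) and Q the product measure whose i-th factor is N(yᵢ, σ²). Then the Rényi divergence of order α satisfies D_α(P‖Q) = α·‖x − y‖₂²/(2σ²) ≤ τ. (This is the Rényi-differential-privacy guarantee of the Gaussian mechanism with ℓ₂-sensitivity Δ.) -/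
open MeasureTheory ProbabilityTheory

/-- The Euclidean (ℓ₂) norm on `ℝ^m`. -/
noncomputable def l2norm {m : ℕ} (x : Fin m → ℝ) : ℝ :=
  Real.sqrt (∑ i, (x i) ^ 2)

section helpers
open Real Finset Set
open scoped ENNReal NNReal

lemma my_lintegral_pi_prod : ∀ {n : ℕ} (μ : Fin n → Measure ℝ) [∀ i, SigmaFinite (μ i)]
    (f : Fin n → ℝ → ℝ≥0∞), (∀ i, Measurable (f i)) →
    ∫⁻ t, ∏ i, f i (t i) ∂Measure.pi μ = ∏ i, ∫⁻ u, f i u ∂μ i := by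
  intro n
  induction n with
  | zero =>
    intro μ _ f hf
    simp [Measure.pi_of_empty]
  | succ n ih =>
    intro μ _ f hf
    have hmp := (measurePreserving_piFinSuccAbove μ 0).symm
    rw [← hmp.lintegral_comp_emb (MeasurableEquiv.measurableEmbedding _)]
    simp_rw [MeasurableEquiv.piFinSuccAbove_symm_apply, Fin.insertNthEquiv,
      Fin.insertNth_zero, Equiv.coe_fn_mk, Fin.prod_univ_succ, Fin.cons_zero, Fin.cons_succ,
      Fin.zero_succAbove, cast_eq]
    rw [lintegral_prod_mul (f := f 0) (g := fun b : Fin n → ℝ => ∏ i : Fin n, f i.succ (b i))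
      (hf 0).aemeasurable
      (Finset.measurable_prod _ fun i _ => (hf i.succ).comp (measurable_pi_apply i)).aemeasurable]
    rw [ih _ _ fun i => hf i.succ]

lemma my_pi_withDensity {n : ℕ} (μ : Fin n → Measure ℝ) [∀ i, SigmaFinite (μ i)]
    (g : Fin n → ℝ → ℝ≥0∞) (hg : ∀ i, Measurable (g i))
    [∀ i, SigmaFinite ((μ i).withDensity (g i))] :
    Measure.pi (fun i => (μ i).withDensity (g i))
      = (Measure.pi μ).withDensity (fun t => ∏ i, g i (t i)) := by
  refine Measure.pi_eq fun s hs => ?_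
  rw [withDensity_apply _ (MeasurableSet.univ_pi hs),
    ← lintegral_indicator (MeasurableSet.univ_pi hs)]
  have : ∀ t : Fin n → ℝ, (Set.pi Set.univ s).indicator (fun t => ∏ i, g i (t i)) t
      = ∏ i, (s i).indicator (g i) (t i) := by
    intro t
    by_cases ht : t ∈ Set.pi Set.univ s
    · rw [Set.indicator_of_mem ht]
      exact Finset.prod_congr rfl fun i _ =>
        (Set.indicator_of_mem (ht i (Set.mem_univ i)) _).symm
    · rw [Set.indicator_of_notMem ht]
      rw [Set.mem_pi] at ht
      push_neg at ht
      obtain ⟨i, -, hi⟩ := ht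
      exact (Finset.prod_eq_zero (Finset.mem_univ i)
        (Set.indicator_of_notMem hi _)).symm
  simp_rw [this]
  rw [my_lintegral_pi_prod μ _ fun i => (hg i).indicator (hs i)]
  exact Finset.prod_congr rfl fun i _ => by
    rw [lintegral_indicator (hs i), ← withDensity_apply _ (hs i)]

lemma my_pdf_ratio (a b u α : ℝ) (v : ℝ≥0) (hv : 0 < (v : ℝ)) :
    gaussianPDFReal b v u * (gaussianPDFReal a v u / gaussianPDFReal b v u) ^ α
      = Real.exp (α * (α - 1) * (a - b) ^ 2 / (2 * v)) *
        gaussianPDFReal (b + α * (a - b)) v u := by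
  have hπ : (0:ℝ) < 2 * π * v := by positivity
  have hC : (0:ℝ) < (Real.sqrt (2 * π * v))⁻¹ := by positivity
  simp only [gaussianPDFReal]
  rw [mul_div_mul_left _ _ (ne_of_gt hC), ← Real.exp_sub,
    Real.rpow_def_of_pos (Real.exp_pos _), Real.log_exp]
  rw [mul_assoc, ← Real.exp_add, show rexp (α * (α - 1) * (a - b) ^ 2 / (2 * ↑v)) *
      ((√(2 * π * ↑v))⁻¹ * rexp (-(u - (b + α * (a - b))) ^ 2 / (2 * ↑v)))
    = (√(2 * π * ↑v))⁻¹ * rexp (α * (α - 1) * (a - b) ^ 2 / (2 * ↑v)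
        + -(u - (b + α * (a - b))) ^ 2 / (2 * ↑v)) by rw [Real.exp_add]; ring]
  congr 1
  have hv' : (v : ℝ) ≠ 0 := ne_of_gt hv
  field_simp
  ring

lemma my_onedim (a b α : ℝ) (v : ℝ≥0) (hv : 0 < (v : ℝ)) :
    ∫⁻ u, ENNReal.ofReal (((gaussianPDF a v u / gaussianPDF b v u).toReal) ^ α)
        ∂(gaussianReal b v)
      = ENNReal.ofReal (Real.exp (α * (α - 1) * (a - b) ^ 2 / (2 * v))) := by
  have hv0 : v ≠ 0 := by exact_mod_cast ne_of_gt hv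
  rw [gaussianReal_of_var_ne_zero b hv0,
    lintegral_withDensity_eq_lintegral_mul _ (measurable_gaussianPDF b v)
      (g := fun u => ENNReal.ofReal (((gaussianPDF a v u / gaussianPDF b v u).toReal) ^ α))
      (((measurable_gaussianPDF a v).div (measurable_gaussianPDF b v)).ennreal_toReal.pow_const
        α).ennreal_ofReal]
  have hpt : ∀ u : ℝ, ((gaussianPDF b v) * fun u => ENNReal.ofReal
      (((gaussianPDF a v u / gaussianPDF b v u).toReal) ^ α)) u
      = ENNReal.ofReal (Real.exp (α * (α - 1) * (a - b) ^ 2 / (2 * v)))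
        * ENNReal.ofReal (gaussianPDFReal (b + α * (a - b)) v u) := by
    intro u
    simp only [Pi.mul_apply, gaussianPDF]
    rw [ENNReal.toReal_div, ENNReal.toReal_ofReal (gaussianPDFReal_nonneg a v u),
      ENNReal.toReal_ofReal (gaussianPDFReal_nonneg b v u),
      ← ENNReal.ofReal_mul (gaussianPDFReal_nonneg b v u), my_pdf_ratio a b u α v hv,
      ENNReal.ofReal_mul (Real.exp_nonneg _)]
  simp_rw [hpt]
  rw [lintegral_const_mul _ (measurable_gaussianPDFReal _ _).ennreal_ofReal,
    lintegral_gaussianPDFReal_eq_one (b + α * (a - b)) hv0, mul_one]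

end helpers

open scoped ENNReal NNReal

/-- RDP guarantee of the Gaussian mechanism with ℓ₂-sensitivity `Δ`: with
`σ² = Δ²·α/(2τ)`, the Rényi divergence of order `α` between the product Gaussians
centered at `x` and `y` (with `‖x − y‖₂ ≤ Δ`) equals `α‖x − y‖₂²/(2σ²) ≤ τ`. -/
theorem gaussian_mechanism_rdp (m : ℕ) (hm : 0 < m) (x y : Fin m → ℝ) (Δ α τ : ℝ)
    (hΔ : 0 < Δ) (hxy : l2norm (x - y) ≤ Δ) (hα : 1 < α) (hτ : 0 < τ)
    (σ2 : ℝ) (hσ2 : σ2 = Δ ^ 2 * α / (2 * τ)) :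
    renyiDiv α (Measure.pi fun i => gaussianReal (x i) σ2.toNNReal)
        (Measure.pi fun i => gaussianReal (y i) σ2.toNNReal)
      = ((α * (l2norm (x - y)) ^ 2 / (2 * σ2) : ℝ) : EReal) ∧
    ((α * (l2norm (x - y)) ^ 2 / (2 * σ2) : ℝ) : EReal) ≤ (τ : EReal) := by
  have hα0 : (0:ℝ) < α := lt_trans one_pos hα
  have hσ2pos : 0 < σ2 := by rw [hσ2]; positivity
  set v : ℝ≥0 := σ2.toNNReal with hvdef
  have hvr : (v : ℝ) = σ2 := Real.coe_toNNReal _ hσ2pos.le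
  have hv : 0 < (v : ℝ) := by rw [hvr]; exact hσ2pos
  have hv0 : v ≠ 0 := by exact_mod_cast ne_of_gt hv
  set P : Measure (Fin m → ℝ) := Measure.pi fun i => gaussianReal (x i) v with hP
  set Q : Measure (Fin m → ℝ) := Measure.pi fun i => gaussianReal (y i) v with hQ
  set f : (Fin m → ℝ) → ℝ≥0∞ :=
    fun t => ∏ i, gaussianPDF (x i) v (t i) / gaussianPDF (y i) v (t i) with hfdef
  have hfmeas : Measurable f :=
    Finset.measurable_prod _ fun i _ =>
      ((measurable_gaussianPDF _ _).comp (measurable_pi_apply i)).div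
        ((measurable_gaussianPDF _ _).comp (measurable_pi_apply i))
  have hpmeas : Measurable (fun t : Fin m → ℝ => ∏ i, gaussianPDF (x i) v (t i)) :=
    Finset.measurable_prod _ fun i _ =>
      (measurable_gaussianPDF _ _).comp (measurable_pi_apply i)
  have hqmeas : Measurable (fun t : Fin m → ℝ => ∏ i, gaussianPDF (y i) v (t i)) :=
    Finset.measurable_prod _ fun i _ =>
      (measurable_gaussianPDF _ _).comp (measurable_pi_apply i)
  haveI I1 : ∀ i : Fin m, SigmaFinite ((volume : Measure ℝ).withDensity
      (gaussianPDF (x i) v)) := fun i => by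
    rw [← gaussianReal_of_var_ne_zero _ hv0]; infer_instance
  haveI I2 : ∀ i : Fin m, SigmaFinite ((volume : Measure ℝ).withDensity
      (gaussianPDF (y i) v)) := fun i => by
    rw [← gaussianReal_of_var_ne_zero _ hv0]; infer_instance
  have hPd : P = (Measure.pi fun _ => (volume : Measure ℝ)).withDensity
      (fun t => ∏ i, gaussianPDF (x i) v (t i)) := by
    rw [hP]
    rw [show (fun i : Fin m => gaussianReal (x i) v)
      = fun i => (volume : Measure ℝ).withDensity (gaussianPDF (x i) v) from
      funext fun i => gaussianReal_of_var_ne_zero _ hv0]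
    exact my_pi_withDensity _ _ fun i => measurable_gaussianPDF _ _
  have hQd : Q = (Measure.pi fun _ => (volume : Measure ℝ)).withDensity
      (fun t => ∏ i, gaussianPDF (y i) v (t i)) := by
    rw [hQ]
    rw [show (fun i : Fin m => gaussianReal (y i) v)
      = fun i => (volume : Measure ℝ).withDensity (gaussianPDF (y i) v) from
      funext fun i => gaussianReal_of_var_ne_zero _ hv0]
    exact my_pi_withDensity _ _ fun i => measurable_gaussianPDF _ _
  have hPQ : P = Q.withDensity f := by
    rw [hQd, hPd]
    rw [← withDensity_mul _ hqmeas hfmeas]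
    congr 1
    funext t
    rw [hfdef]
    simp only [Pi.mul_apply]
    rw [← Finset.prod_mul_distrib]
    refine Finset.prod_congr rfl fun i _ => ?_
    exact (ENNReal.mul_div_cancel (ne_of_gt (gaussianPDF_pos _ hv0 _))
      ENNReal.ofReal_ne_top).symm ▸ rfl
  have hac : P ≪ Q := hPQ ▸ withDensity_absolutelyContinuous Q f
  have hrn : P.rnDeriv Q =ᵐ[Q] f := by
    rw [hPQ]; exact Measure.rnDeriv_withDensity Q hfmeas
  set S : ℝ := ∑ i, (x i - y i) ^ 2 with hSdef
  have hSnn : 0 ≤ S := Finset.sum_nonneg fun i _ => sq_nonneg _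
  have hl2nn : 0 ≤ l2norm (x - y) := Real.sqrt_nonneg _
  have hl2 : l2norm (x - y) ^ 2 = S := by
    rw [l2norm, Real.sq_sqrt (Finset.sum_nonneg fun i _ => sq_nonneg _)]
    exact Finset.sum_congr rfl fun i _ => by rw [Pi.sub_apply]
  have hint : ∫ t, (P.rnDeriv Q t).toReal ^ α ∂Q
      = Real.exp (α * (α - 1) * S / (2 * σ2)) := by
    rw [integral_congr_ae (hrn.mono fun t ht => by rw [ht])]
    have hfr : ∀ t, (f t).toReal ^ α
        = ∏ i, ((gaussianPDF (x i) v (t i) / gaussianPDF (y i) v (t i)).toReal) ^ α := by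
      intro t
      rw [hfdef]
      simp only
      rw [ENNReal.toReal_prod]
      exact (Real.finset_prod_rpow _ _ (fun i _ => ENNReal.toReal_nonneg) α).symm
    simp_rw [hfr]
    have hmeas : Measurable fun t : Fin m → ℝ =>
        ∏ i, ((gaussianPDF (x i) v (t i) / gaussianPDF (y i) v (t i)).toReal) ^ α :=
      Finset.measurable_prod _ fun i _ =>
        ((((measurable_gaussianPDF _ _).comp (measurable_pi_apply i)).div
          ((measurable_gaussianPDF _ _).comp (measurable_pi_apply i))).ennreal_toReal.pow_const α)
    rw [integral_eq_lintegral_of_nonneg_ae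
      (ae_of_all _ fun t => Finset.prod_nonneg fun i _ =>
        Real.rpow_nonneg ENNReal.toReal_nonneg α) hmeas.aestronglyMeasurable]
    have hof : ∀ t : Fin m → ℝ, ENNReal.ofReal
        (∏ i, ((gaussianPDF (x i) v (t i) / gaussianPDF (y i) v (t i)).toReal) ^ α)
        = ∏ i, ENNReal.ofReal
          (((gaussianPDF (x i) v (t i) / gaussianPDF (y i) v (t i)).toReal) ^ α) :=
      fun t => ENNReal.ofReal_prod_of_nonneg fun i _ =>
        Real.rpow_nonneg ENNReal.toReal_nonneg α
    simp_rw [hof]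
    rw [hQ, my_lintegral_pi_prod _
      (fun i u => ENNReal.ofReal (((gaussianPDF (x i) v u / gaussianPDF (y i) v u).toReal) ^ α))
      fun i =>
      ((((measurable_gaussianPDF _ _).div (measurable_gaussianPDF _ _)).ennreal_toReal.pow_const
        α).ennreal_ofReal)]
    have honed : ∀ i : Fin m, ∫⁻ u, ENNReal.ofReal
        (((gaussianPDF (x i) v u / gaussianPDF (y i) v u).toReal) ^ α) ∂gaussianReal (y i) v
        = ENNReal.ofReal (Real.exp (α * (α - 1) * (x i - y i) ^ 2 / (2 * σ2))) := by
      intro i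
      rw [my_onedim (x i) (y i) α v hv, hvr]
    simp_rw [honed]
    rw [← ENNReal.ofReal_prod_of_nonneg fun i _ => Real.exp_nonneg _, ← Real.exp_sum,
      ENNReal.toReal_ofReal (Real.exp_nonneg _)]
    congr 1
    rw [hSdef, ← Finset.sum_div, Finset.mul_sum]
  refine ⟨?_, ?_⟩
  · rw [renyiDiv, if_pos hac, hint, Real.log_exp]
    norm_cast
    rw [hl2]
    have h1 : α - 1 ≠ 0 := ne_of_gt (by linarith)
    field_simp
  · rw [EReal.coe_le_coe_iff, hl2]
    have hSΔ : S ≤ Δ ^ 2 := by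
      rw [← hl2]
      exact pow_le_pow_left₀ hl2nn hxy 2
    have heq : α * S / (2 * σ2) = S * τ / Δ ^ 2 := by
      rw [hσ2]
      field_simp
    rw [heq, div_le_iff₀ (by positivity)]
    nlinarith
end

section
/- Let x₁, …, x_n be points of ℝ^d, let t be an integer with 1 ≤ t ≤ n, and for r ≥ 0 and p ∈ ℝ^d let B_r(p) = #{i ∈ {1,…,n} : ‖xᵢ − p‖₂ ≤ r} and B̄_r(p) = min(B_r(p), t). Define L(r) = (1/t)·max over choices of t distinct indices i₁, …, i_t ∈ {1,…,n} of (B̄_r(x_{i₁}) + ⋯ + B̄_r(x_{i_t})). If two datasets (x₁, …, x_n) and (x′₁, …, x′_n) differ in exactly one point, then for every r ≥ 0 the corresponding values satisfy |L(r) − L′(r)| ≤ 2. (This is the sensitivity bound on the utility function of the GoodRadius subroutine.) -/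
/-- `B_r(p)`: the number of points of the dataset `x` within ℓ₂-distance `r` of `p`. -/
noncomputable def ballCount {d n : ℕ} (x : Fin n → EuclideanSpace ℝ (Fin d))
    (r : ℝ) (p : EuclideanSpace ℝ (Fin d)) : ℕ :=
  {i : Fin n | ‖x i - p‖ ≤ r}.ncard

/-- The GoodRadius utility function
`L(r) = (1/t)·max over t distinct indices i₁, …, i_t of (B̄_r(x_{i₁}) + ⋯ + B̄_r(x_{i_t}))`,
where `B̄_r(p) = min(B_r(p), t)`. -/
noncomputable def goodRadiusL {d n : ℕ} (x : Fin n → EuclideanSpace ℝ (Fin d))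
    (t : ℕ) (r : ℝ) : ℝ :=
  (1 / (t : ℝ)) *
    sSup ((fun s : Finset (Fin n) =>
      ∑ i ∈ s, min ((ballCount x r (x i) : ℝ)) (t : ℝ)) '' {s | s.card = t})

lemma ballCount_le_succ {d n : ℕ} (x x' : Fin n → EuclideanSpace ℝ (Fin d))
    (j : Fin n) (hagree : ∀ i, i ≠ j → x i = x' i) (r : ℝ)
    (p : EuclideanSpace ℝ (Fin d)) :
    (ballCount x r p : ℝ) ≤ (ballCount x' r p : ℝ) + 1 := by
  have hsub : {i : Fin n | ‖x i - p‖ ≤ r} ⊆ {i : Fin n | ‖x' i - p‖ ≤ r} ∪ {j} := by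
    intro k hk
    simp only [Set.mem_union, Set.mem_setOf_eq, Set.mem_singleton_iff] at *
    by_cases hkj : k = j
    · exact Or.inr hkj
    · exact Or.inl (by rw [← hagree k hkj]; exact hk)
  have h1 : ballCount x r p ≤ ballCount x' r p + 1 := by
    calc ({i : Fin n | ‖x i - p‖ ≤ r}).ncard
        ≤ ({i : Fin n | ‖x' i - p‖ ≤ r} ∪ {j}).ncard :=
          Set.ncard_le_ncard hsub (Set.toFinite _)
      _ ≤ ({i : Fin n | ‖x' i - p‖ ≤ r}).ncard + ({j} : Set (Fin n)).ncard :=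
          Set.ncard_union_le _ _
      _ = ballCount x' r p + 1 := by rw [Set.ncard_singleton]; rfl
  exact_mod_cast h1

lemma goodRadius_sum_le {d n t : ℕ} (ht1 : 1 ≤ t)
    (x x' : Fin n → EuclideanSpace ℝ (Fin d)) (j : Fin n)
    (hagree : ∀ i, i ≠ j → x i = x' i) (r : ℝ)
    (s : Finset (Fin n)) (hs : s.card = t) :
    ∑ i ∈ s, min ((ballCount x r (x i) : ℝ)) (t : ℝ) ≤
      (∑ i ∈ s, min ((ballCount x' r (x' i) : ℝ)) (t : ℝ)) + 2 * t := by
  have hterm : ∀ i ∈ s,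
      min ((ballCount x r (x i) : ℝ)) (t : ℝ) ≤
        min ((ballCount x' r (x' i) : ℝ)) (t : ℝ) + (if i = j then (t : ℝ) else 1) := by
    intro i _
    by_cases hij : i = j
    · simp only [if_pos hij]
      have h1 : min ((ballCount x r (x i) : ℝ)) (t : ℝ) ≤ t := min_le_right _ _
      have h2 : (0 : ℝ) ≤ min ((ballCount x' r (x' i) : ℝ)) (t : ℝ) :=
        le_min (by positivity) (by positivity)
      linarith
    · simp only [if_neg hij]
      have hx : x i = x' i := hagree i hij
      rw [hx]
      have hb := ballCount_le_succ x x' j hagree r (x' i)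
      rcases le_total ((ballCount x' r (x' i) : ℝ)) (t : ℝ) with h | h
      · rw [min_eq_left h]; exact le_trans (min_le_left _ _) hb
      · rw [min_eq_right h]
        have := min_le_right ((ballCount x r (x' i) : ℝ)) (t : ℝ)
        linarith
  have hif : ∑ i ∈ s, (if i = j then (t : ℝ) else 1) ≤ 2 * t := by
    have heq : ∀ i ∈ s, (if i = j then (t : ℝ) else 1)
        = 1 + (if i = j then (t : ℝ) - 1 else 0) := by
      intro i _; split <;> ring
    rw [Finset.sum_congr rfl heq, Finset.sum_add_distrib, Finset.sum_const,
      Finset.sum_ite_eq' s j (fun _ => (t : ℝ) - 1), hs]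
    have ht1' : (1 : ℝ) ≤ t := by exact_mod_cast ht1
    split <;> simp [nsmul_eq_mul] <;> linarith
  calc ∑ i ∈ s, min ((ballCount x r (x i) : ℝ)) (t : ℝ)
      ≤ ∑ i ∈ s, (min ((ballCount x' r (x' i) : ℝ)) (t : ℝ)
          + (if i = j then (t : ℝ) else 1)) := Finset.sum_le_sum hterm
    _ = (∑ i ∈ s, min ((ballCount x' r (x' i) : ℝ)) (t : ℝ))
          + ∑ i ∈ s, (if i = j then (t : ℝ) else 1) := Finset.sum_add_distrib
    _ ≤ _ := by linarith

lemma goodRadiusL_le {d n t : ℕ} (ht1 : 1 ≤ t) (htn : t ≤ n)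
    (x x' : Fin n → EuclideanSpace ℝ (Fin d)) (j : Fin n)
    (hagree : ∀ i, i ≠ j → x i = x' i) (r : ℝ) :
    goodRadiusL x t r ≤ goodRadiusL x' t r + 2 := by
  have ht0 : (0 : ℝ) < t := by exact_mod_cast ht1
  obtain ⟨s0, _, hs0⟩ := Finset.exists_subset_card_eq
    (show t ≤ (Finset.univ : Finset (Fin n)).card by simpa using htn)
  unfold goodRadiusL
  set A := ((fun s : Finset (Fin n) =>
      ∑ i ∈ s, min ((ballCount x r (x i) : ℝ)) (t : ℝ)) '' {s | s.card = t}) with hA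
  set B := ((fun s : Finset (Fin n) =>
      ∑ i ∈ s, min ((ballCount x' r (x' i) : ℝ)) (t : ℝ)) '' {s | s.card = t}) with hB
  have hBbdd : BddAbove B := (Set.toFinite B).bddAbove
  have hAne : A.Nonempty := ⟨_, ⟨s0, hs0, rfl⟩⟩
  have hkey : sSup A ≤ sSup B + 2 * t := by
    apply csSup_le hAne
    rintro a ⟨s, hsmem, rfl⟩
    calc (fun s : Finset (Fin n) =>
        ∑ i ∈ s, min ((ballCount x r (x i) : ℝ)) (t : ℝ)) s
        ≤ (∑ i ∈ s, min ((ballCount x' r (x' i) : ℝ)) (t : ℝ)) + 2 * t :=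
          goodRadius_sum_le ht1 x x' j hagree r s hsmem
      _ ≤ sSup B + 2 * t := add_le_add (le_csSup hBbdd ⟨s, hsmem, rfl⟩) le_rfl
  have ht0' : (t : ℝ) ≠ 0 := ne_of_gt ht0
  calc (1 / (t : ℝ)) * sSup A ≤ (1 / (t : ℝ)) * (sSup B + 2 * t) := by
        apply mul_le_mul_of_nonneg_left hkey (by positivity)
    _ = (1 / (t : ℝ)) * sSup B + 2 := by field_simp
    _ ≤ _ := le_refl _

/-- Sensitivity bound on the utility function of the GoodRadius subroutine: if
two datasets differ in exactly one point, then `|L(r) − L′(r)| ≤ 2` for every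
`r ≥ 0`. -/
theorem goodRadiusL_sensitivity (d n t : ℕ) (ht1 : 1 ≤ t) (htn : t ≤ n)
    (x x' : Fin n → EuclideanSpace ℝ (Fin d)) (j : Fin n)
    (hagree : ∀ i, i ≠ j → x i = x' i) (r : ℝ) (hr : 0 ≤ r) :
    |goodRadiusL x t r - goodRadiusL x' t r| ≤ 2 := by
  have h1 := goodRadiusL_le ht1 htn x x' j hagree r
  have h2 := goodRadiusL_le ht1 htn x' x j (fun i hi => (hagree i hi).symm) r
  rw [abs_sub_le_iff]
  constructor <;> linarith
end
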